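/- Let S be a finite set with |S| = K ≥ 1, let μ be a probability distribution on S, and let Y_1, …, Y_N be independent S-valued random variables each with law μ. Let μ̂_N := (1/N) Σ_{i=1}^N δ_{Y_i} be the empirical distribution. Then E[ ‖μ̂_N − μ‖ ] ≤ √(K − 1) / (2√N). -/

import Mathlib

/-!
Law-of-large-numbers bound in total variation for the empirical distribution of
`N` i.i.d. random variables with values in a finite set of cardinality `K`:
`E[ ‖μ̂_N − μ‖_TV ] ≤ √(K−1) / (2√N)`.
-/

open MeasureTheory

namespace EmpiricalTV

/-- Total variation distance between two (densities of) distributions on a finite set: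
`‖μ − ν‖ := (1/2) Σ_y |μ(y) − ν(y)|`. -/
noncomputable def tv {S : Type*} [Fintype S] (μ ν : S → ℝ) : ℝ := (1 / 2) * ∑ y, |μ y - ν y|

/-- The empirical distribution `μ̂_N = (1/N) Σ_{i=1}^N δ_{Y_i}` of the sample `Y`. -/
noncomputable def emp {Ω S : Type*} [Fintype S] [DecidableEq S] {N : ℕ}
    (Y : Fin N → Ω → S) (ω : Ω) (y : S) : ℝ :=
  (1 / (N : ℝ)) * ∑ i, if Y i ω = y then 1 else 0

/-- A bounded measurable function is integrable w.r.t. a probability measure. -/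
lemma integrable_of_bdd {Ω : Type*} [MeasurableSpace Ω] {P : Measure Ω}
    [IsProbabilityMeasure P] {f : Ω → ℝ} (hf : Measurable f) {C : ℝ}
    (h : ∀ ω, |f ω| ≤ C) : Integrable f P :=
  (integrable_const C).mono' hf.aestronglyMeasurable
    (Filter.Eventually.of_forall (by simpa [Real.norm_eq_abs] using h))

/-- `(E |X|)^2 ≤ E X^2` for a probability measure. -/
lemma sq_integral_abs_le {Ω : Type*} [MeasurableSpace Ω] {P : Measure Ω}
    [IsProbabilityMeasure P] {X : Ω → ℝ} (hX : Integrable X P)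
    (hX2 : Integrable (fun ω => X ω ^ 2) P) :
    (∫ ω, |X ω| ∂P) ^ 2 ≤ ∫ ω, X ω ^ 2 ∂P := by
  set m := ∫ ω, |X ω| ∂P with hm
  have h0 : 0 ≤ ∫ ω, (|X ω| - m) ^ 2 ∂P := integral_nonneg fun ω => sq_nonneg _
  have hexp : ∀ ω, (|X ω| - m) ^ 2 = (X ω ^ 2 - (2 * m) * |X ω|) + m ^ 2 := by
    intro ω; rw [sub_sq, sq_abs]; ring
  have hint1 : Integrable (fun ω => 2 * m * |X ω|) P := hX.abs.const_mul _
  have hint2 : Integrable (fun ω => X ω ^ 2 - 2 * m * |X ω|) P := hX2.sub hint1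
  have h1 : ∫ ω, (|X ω| - m) ^ 2 ∂P = (∫ ω, X ω ^ 2 ∂P) - m ^ 2 := by
    simp_rw [hexp]
    rw [integral_add hint2 (integrable_const _),
      integral_sub hX2 hint1, integral_const_mul, integral_const]
    simp only [measure_univ, probReal_univ, ENNReal.toReal_one, smul_eq_mul, one_mul, ← hm]
    ring
  linarith [h0, h1.symm.trans_le (le_of_eq rfl)]

theorem expected_tv_iid_le
    {Ω : Type*} [MeasurableSpace Ω] (P : Measure Ω) [IsProbabilityMeasure P]
    {S : Type*} [Fintype S] [DecidableEq S] [MeasurableSpace S]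
    [MeasurableSingletonClass S]
    {N : ℕ} (hN : 0 < N)
    (Y : Fin N → Ω → S) (hYmeas : ∀ i, Measurable (Y i))
    (hYindep : ProbabilityTheory.iIndepFun Y P)
    (μ : S → ℝ) (hμ0 : ∀ y, 0 ≤ μ y) (hμ1 : ∑ y, μ y = 1)
    (hYlaw : ∀ i y, (P (Y i ⁻¹' {y})).toReal = μ y)
    (hK : 1 ≤ Fintype.card S) :
    ∫ ω, tv (emp Y ω) μ ∂P ≤
      Real.sqrt ((Fintype.card S : ℝ) - 1) / (2 * Real.sqrt N) := by
  classical
  set K := Fintype.card S with hKdef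
  have hNpos : (0:ℝ) < N := by exact_mod_cast hN
  -- indicator functions
  set f : S → Fin N → Ω → ℝ := fun y i ω => if Y i ω = y then 1 else 0 with hfdef
  have hfmeas : ∀ y i, Measurable (f y i) := by
    intro y i
    exact Measurable.ite ((hYmeas i) (measurableSet_singleton y)) measurable_const
      measurable_const
  have hEf : ∀ y i, ∫ ω, f y i ω ∂P = μ y := by
    intro y i
    have hind : f y i = Set.indicator (Y i ⁻¹' {y}) (fun _ => (1:ℝ)) := by
      funext ω
      by_cases h : Y i ω = y <;> simp [hfdef, h, Set.indicator, Set.mem_preimage]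
    rw [hind, integral_indicator_const _ ((hYmeas i) (measurableSet_singleton y))]
    simp [measureReal_def, hYlaw i y]
  -- centered indicator functions
  set g : S → Fin N → Ω → ℝ := fun y i ω => f y i ω - μ y with hgdef
  have hgmeas : ∀ y i, Measurable (g y i) := fun y i => (hfmeas y i).sub measurable_const
  have hμle1 : ∀ y, μ y ≤ 1 := by
    intro y
    rw [← hμ1]
    exact Finset.single_le_sum (fun z _ => hμ0 z) (Finset.mem_univ y)
  have hgbdd : ∀ y i ω, |g y i ω| ≤ 2 := by
    intro y i ω
    have h0 := hμ0 y; have h1 := hμle1 y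
    by_cases h : Y i ω = y <;>
      · simp only [hgdef, hfdef, h, if_true, if_false, abs_le]
        constructor <;> simp <;> linarith
  have hgint : ∀ y i, Integrable (g y i) P :=
    fun y i => integrable_of_bdd (hgmeas y i) (hgbdd y i)
  have hEg : ∀ y i, ∫ ω, g y i ω ∂P = 0 := by
    intro y i
    rw [show g y i = fun ω => f y i ω - μ y from rfl]
    rw [integral_sub (integrable_of_bdd (hfmeas y i)
      (C := 1) (fun ω => by by_cases h : Y i ω = y <;> simp [hfdef, h])) (integrable_const _),
      hEf, integral_const]
    simp
  -- second moments
  have hgsq : ∀ y i, ∫ ω, (g y i ω) ^ 2 ∂P = μ y * (1 - μ y) := by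
    intro y i
    have hexp : ∀ ω, (g y i ω) ^ 2 = (1 - 2 * μ y) * f y i ω + (μ y) ^ 2 := by
      intro ω
      by_cases h : Y i ω = y <;> simp [hgdef, hfdef, h] <;> ring
    simp_rw [hexp]
    rw [integral_add ((integrable_of_bdd (hfmeas y i)
        (C := 1) (fun ω => by by_cases h : Y i ω = y <;> simp [hfdef, h])).const_mul _)
      (integrable_const _), integral_const_mul, hEf, integral_const]
    simp only [measure_univ, probReal_univ, ENNReal.toReal_one, smul_eq_mul, one_mul]
    ring
  -- cross terms vanish by independence
  have hcross : ∀ y, ∀ i j : Fin N, i ≠ j → ∫ ω, g y i ω * g y j ω ∂P = 0 := by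
    intro y i j hij
    have φmeas : Measurable (fun s : S => (if s = y then (1:ℝ) else 0) - μ y) :=
      measurable_of_countable _
    have hind : ProbabilityTheory.IndepFun (g y i) (g y j) P :=
      (hYindep.indepFun hij).comp φmeas φmeas
    have h : ∫ ω, (g y i * g y j) ω ∂P = (∫ ω, g y i ω ∂P) * ∫ ω, g y j ω ∂P :=
      hind.integral_mul_eq_mul_integral (hgint y i).aestronglyMeasurable (hgint y j).aestronglyMeasurable
    simp only [Pi.mul_apply] at h
    rw [h, hEg, hEg, mul_zero]
  -- product integrability
  have hprodint : ∀ y (i j : Fin N), Integrable (fun ω => g y i ω * g y j ω) P := by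
    intro y i j
    refine integrable_of_bdd ((hgmeas y i).mul (hgmeas y j)) (C := 4) fun ω => ?_
    calc |g y i ω * g y j ω| = |g y i ω| * |g y j ω| := abs_mul _ _
      _ ≤ 2 * 2 := mul_le_mul (hgbdd y i ω) (hgbdd y j ω) (abs_nonneg _) (by norm_num)
      _ = 4 := by norm_num
  -- second moment of the sum
  have hsum2 : ∀ y, ∫ ω, (∑ i, g y i ω) ^ 2 ∂P = N * (μ y * (1 - μ y)) := by
    intro y
    have hexpand : ∀ ω, (∑ i, g y i ω) ^ 2 = ∑ i, ∑ j, g y i ω * g y j ω := by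
      intro ω; rw [sq, Finset.sum_mul_sum]
    simp_rw [hexpand]
    rw [integral_finset_sum _ (fun i _ => integrable_finset_sum _ (fun j _ => hprodint y i j))]
    have hinner : ∀ i : Fin N, ∫ ω, ∑ j, g y i ω * g y j ω ∂P = μ y * (1 - μ y) := by
      intro i
      rw [integral_finset_sum _ (fun j _ => hprodint y i j)]
      rw [Finset.sum_eq_single i]
      · simp_rw [← sq]; exact hgsq y i
      · intro j _ hji; exact hcross y i j (Ne.symm hji)
      · intro h; exact absurd (Finset.mem_univ i) h
    simp_rw [hinner]
    simp [Finset.card_univ, mul_comm]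
  -- deviation functions
  set D : S → Ω → ℝ := fun y ω => emp Y ω y - μ y with hDdef
  have hDform : ∀ y ω, D y ω = (1 / (N:ℝ)) * ∑ i, g y i ω := by
    intro y ω
    simp only [hDdef, hgdef, emp, Finset.sum_sub_distrib, Finset.sum_const,
      Finset.card_univ, Fintype.card_fin, nsmul_eq_mul, mul_sub]
    have : (1 / (N:ℝ)) * ((N:ℝ) * μ y) = μ y := by field_simp
    rw [this]
  have hDmeas : ∀ y, Measurable (D y) := by
    intro y
    have : D y = fun ω => (1 / (N:ℝ)) * ∑ i, g y i ω := funext (hDform y)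
    rw [this]
    exact (Finset.measurable_sum _ (fun i _ => hgmeas y i)).const_mul _
  have hDbdd : ∀ y ω, |D y ω| ≤ 2 := by
    intro y ω
    rw [hDform]
    rw [abs_mul]
    have h1 : |∑ i, g y i ω| ≤ ∑ i : Fin N, (2:ℝ) :=
      (Finset.abs_sum_le_sum_abs _ _).trans
        (Finset.sum_le_sum fun i _ => hgbdd y i ω)
    have h2 : |1 / (N:ℝ)| = 1 / (N:ℝ) := abs_of_pos (by positivity)
    rw [h2]
    calc 1 / (N:ℝ) * |∑ i, g y i ω| ≤ 1 / (N:ℝ) * (∑ i : Fin N, (2:ℝ)) := by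
          exact mul_le_mul_of_nonneg_left h1 (by positivity)
      _ = 2 := by
          simp [Finset.sum_const, Finset.card_univ]
          field_simp
  have hDint : ∀ y, Integrable (D y) P := fun y => integrable_of_bdd (hDmeas y) (hDbdd y)
  have hDsqint : ∀ y, Integrable (fun ω => D y ω ^ 2) P := by
    intro y
    refine integrable_of_bdd ((hDmeas y).pow_const 2) (C := 4) fun ω => ?_
    rw [abs_pow]
    nlinarith [hDbdd y ω, abs_nonneg (D y ω)]
  -- second moment of D
  have hDsq : ∀ y, ∫ ω, D y ω ^ 2 ∂P = μ y * (1 - μ y) / N := by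
    intro y
    have : ∀ ω, D y ω ^ 2 = (1 / (N:ℝ))^2 * (∑ i, g y i ω) ^ 2 := by
      intro ω; rw [hDform]; ring
    simp_rw [this]
    rw [integral_const_mul, hsum2]
    field_simp
  -- first absolute moment bound
  have hDabs : ∀ y, ∫ ω, |D y ω| ∂P ≤ Real.sqrt (μ y * (1 - μ y)) / Real.sqrt N := by
    intro y
    have h1 : (∫ ω, |D y ω| ∂P) ^ 2 ≤ μ y * (1 - μ y) / N := by
      rw [← hDsq y]; exact sq_integral_abs_le (hDint y) (hDsqint y)
    have h2 : 0 ≤ ∫ ω, |D y ω| ∂P := integral_nonneg fun ω => abs_nonneg _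
    have h3 : ∫ ω, |D y ω| ∂P ≤ Real.sqrt (μ y * (1 - μ y) / N) := by
      rw [Real.le_sqrt h2 (div_nonneg (by nlinarith [hμ0 y, hμle1 y]) hNpos.le)]
      exact h1
    rwa [Real.sqrt_div (by nlinarith [hμ0 y, hμle1 y]) _] at h3
  -- sum of sqrt bound via Cauchy–Schwarz
  have hCS : ∑ y, Real.sqrt (μ y * (1 - μ y)) ≤ Real.sqrt ((K:ℝ) - 1) := by
    have hsum_nonneg : 0 ≤ ∑ y, Real.sqrt (μ y * (1 - μ y)) :=
      Finset.sum_nonneg fun y _ => Real.sqrt_nonneg _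
    have h1 : (∑ y, Real.sqrt (μ y * (1 - μ y))) ^ 2
        ≤ (K:ℝ) * ∑ y, μ y * (1 - μ y) := by
      have := sq_sum_le_card_mul_sum_sq (s := Finset.univ)
        (f := fun y : S => Real.sqrt (μ y * (1 - μ y)))
      simp only [Finset.card_univ, ← hKdef] at this
      calc (∑ y, Real.sqrt (μ y * (1 - μ y))) ^ 2
          ≤ (K:ℝ) * ∑ y, Real.sqrt (μ y * (1 - μ y)) ^ 2 := this
        _ = (K:ℝ) * ∑ y, μ y * (1 - μ y) := by
            congr 1
            exact Finset.sum_congr rfl fun y _ =>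
              Real.sq_sqrt (by nlinarith [hμ0 y, hμle1 y])
    have h2 : ∑ y, μ y * (1 - μ y) = 1 - ∑ y, μ y ^ 2 := by
      have : ∀ y : S, μ y * (1 - μ y) = μ y - μ y ^ 2 := fun y => by ring
      simp_rw [this, Finset.sum_sub_distrib, hμ1]
    have h3 : (1:ℝ) ≤ (K:ℝ) * ∑ y, μ y ^ 2 := by
      have := sq_sum_le_card_mul_sum_sq (s := Finset.univ) (f := μ)
      simp only [Finset.card_univ, ← hKdef, hμ1, one_pow] at this
      exact this
    have hKpos : (1:ℝ) ≤ (K:ℝ) := by exact_mod_cast hK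
    have h4 : (∑ y, Real.sqrt (μ y * (1 - μ y))) ^ 2 ≤ (K:ℝ) - 1 := by
      rw [h2] at h1
      nlinarith
    rw [Real.le_sqrt hsum_nonneg (by linarith)]
    exact h4
  -- putting it all together
  have habsint : ∀ y, Integrable (fun ω => |D y ω|) P := fun y => (hDint y).abs
  have hmain : ∫ ω, tv (emp Y ω) μ ∂P = (1/2) * ∑ y, ∫ ω, |D y ω| ∂P := by
    have htv : ∀ ω, tv (emp Y ω) μ = (1/2) * ∑ y, |D y ω| := fun ω => rfl
    simp_rw [htv]
    rw [integral_const_mul, integral_finset_sum _ (fun y _ => habsint y)]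
  rw [hmain]
  have hstep : ∑ y, ∫ ω, |D y ω| ∂P
      ≤ Real.sqrt ((K:ℝ) - 1) / Real.sqrt N := by
    calc ∑ y, ∫ ω, |D y ω| ∂P
        ≤ ∑ y, Real.sqrt (μ y * (1 - μ y)) / Real.sqrt N :=
          Finset.sum_le_sum fun y _ => hDabs y
      _ = (∑ y, Real.sqrt (μ y * (1 - μ y))) / Real.sqrt N := by
          rw [Finset.sum_div]
      _ ≤ Real.sqrt ((K:ℝ) - 1) / Real.sqrt N := by
          gcongr
  calc (1/2) * ∑ y, ∫ ω, |D y ω| ∂P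
      ≤ (1/2) * (Real.sqrt ((K:ℝ) - 1) / Real.sqrt N) := by linarith
    _ = Real.sqrt ((K:ℝ) - 1) / (2 * Real.sqrt N) := by ring

end EmpiricalTV
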